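/- For real parameters β > 0, c > 0 and γ ∈ ℝ, let w(y) := β·(1 + (y − γ)²/c²)^(−1/2). Then for every y ∈ ℝ, |y|·w(y)² ≤ β²·(|γ| + c). In particular sup_{y ∈ ℝ} |y|·w(y)² < ∞, which is the condition on the weight function required for the posterior influence function of the (ST-)RCGP to be bounded. -/
import Mathlib


/-- The inverse multiquadric (IMQ) weight function `w(y) = β (1 + (y−γ)²/c²)^{-1/2}`. -/
noncomputable def imqWeight (β c γ : ℝ) : ℝ → ℝ :=
  fun y => β * (1 + (y - γ) ^ 2 / c ^ 2) ^ (-(1 : ℝ) / 2)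

/-- **Quantitative core of the robustness result (Proposition 3.3).**
`|y| w(y)² ≤ β²(|γ| + c)` for every `y`; in particular `sup_y |y| w(y)² < ∞`. -/
theorem stmt10 (β c γ : ℝ) (hβ : 0 < β) (hc : 0 < c) :
    (∀ y : ℝ, |y| * (imqWeight β c γ y) ^ 2 ≤ β ^ 2 * (|γ| + c)) ∧
      BddAbove (Set.range fun y => |y| * (imqWeight β c γ y) ^ 2) := by
  have key : ∀ y : ℝ, |y| * (imqWeight β c γ y) ^ 2 ≤ β ^ 2 * (|γ| + c) := by
    intro y
    set t : ℝ := 1 + (y - γ) ^ 2 / c ^ 2 with ht_def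
    have ht : (0 : ℝ) < t := by positivity
    have hw : (imqWeight β c γ y) ^ 2 = β ^ 2 * t⁻¹ := by
      unfold imqWeight
      rw [mul_pow, ← Real.rpow_natCast (t ^ (-(1:ℝ)/2)) 2, ← Real.rpow_mul ht.le]
      norm_num
      left; exact Real.rpow_neg_one t
    have hy : |y| ≤ (|γ| + c) * t := by
      have h1 : |y| ≤ |γ| + |y - γ| := by
        have : y = γ + (y - γ) := by ring
        calc |y| = |γ + (y - γ)| := by rw [← this]
          _ ≤ |γ| + |y - γ| := abs_add_le _ _
      have h2 : c * |y - γ| ≤ c ^ 2 + (y - γ) ^ 2 := by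
        nlinarith [sq_nonneg (c - |y - γ|), sq_abs (y - γ)]
      have hd : (y - γ) ^ 2 = c ^ 2 * ((y - γ) ^ 2 / c ^ 2) := by
        field_simp
      have h2' : c * |y - γ| ≤ c ^ 2 + c ^ 2 * ((y - γ) ^ 2 / c ^ 2) := by
        rw [← hd]; exact h2
      rw [ht_def]
      nlinarith [abs_nonneg γ, abs_nonneg (y - γ), hc, h1, h2',
        div_nonneg (sq_nonneg (y - γ)) (sq_nonneg c),
        mul_nonneg (abs_nonneg γ) (div_nonneg (sq_nonneg (y - γ)) (sq_nonneg c))]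
    have h3 : |y| / t ≤ |γ| + c := (div_le_iff₀ ht).mpr hy
    calc |y| * (imqWeight β c γ y) ^ 2 = β ^ 2 * (|y| / t) := by rw [hw]; ring
      _ ≤ β ^ 2 * (|γ| + c) := by
          exact mul_le_mul_of_nonneg_left h3 (sq_nonneg β)
  refine ⟨key, ⟨β ^ 2 * (|γ| + c), ?_⟩⟩
  rintro x ⟨y, rfl⟩
  exact key y
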